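/- For every integer k ≥ 1, the generating function of weighted partitions into odd parts with exactly 2k parts satisfies, in ℚ⟦q⟧: ∑_{λ} wt_λ·q^{|λ|} = q^{2k}(1 − q^{4k})^{−1} · ∏_{j=1}^{k}(1 − q^{4j−2})^{−1} · ∏_{j=1}^{k−1}(1 + q^{4j})²(1 − q^{4j})^{−1}, where the sum on the left runs over all partitions λ into odd parts having exactly 2k parts and |λ| denotes the number being partitioned. -/

import Mathlib

/-!
Statement 12: for k ≥ 1, the generating function of weighted partitions into odd parts
with exactly 2k parts equals
q^{2k}(1−q^{4k})^{−1} · ∏_{j=1}^{k}(1−q^{4j−2})^{−1} · ∏_{j=1}^{k−1}(1+q^{4j})²(1−q^{4j})^{−1}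
in ℚ⟦q⟧.
-/

open scoped Classical
open PowerSeries

namespace Stmt12


/-- gap weight -/
def W : ℕ → ℕ := fun d => if d = 1 then 3 else if 2 ≤ d then 4 else 1

lemma geom (n : ℕ) (hn : 0 < n) :
    (1 - X ^ n : PowerSeries ℚ)⁻¹ = PowerSeries.mk fun N => if n ∣ N then (1 : ℚ) else 0 := by
  have hc : constantCoeff (1 - X ^ n : PowerSeries ℚ) ≠ 0 := by
    simp [map_sub, map_pow, constantCoeff_X, zero_pow hn.ne']
  rw [PowerSeries.inv_eq_iff_mul_eq_one hc]
  ext N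
  rw [mul_sub, mul_one, map_sub, coeff_mul_X_pow', coeff_mk]
  simp only [coeff_mk, coeff_one]
  by_cases hle : n ≤ N
  · have hN0 : N ≠ 0 := by omega
    have hdvd : n ∣ N ↔ n ∣ N - n := by
      constructor
      · intro h; exact Nat.dvd_sub h dvd_rfl
      · intro h
        have : N = N - n + n := by omega
        rw [this]; exact Nat.dvd_add h dvd_rfl
    rw [if_pos hle, if_neg hN0]
    by_cases h : n ∣ N
    · rw [if_pos h, if_pos (hdvd.mp h)]; ring
    · rw [if_neg h, if_neg (fun hh => h (hdvd.mpr hh))]; ring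
  · rw [if_neg hle]
    by_cases hN0 : N = 0
    · subst hN0; simp [dvd_zero]
    · have : ¬ n ∣ N := fun h => by
        rcases h with ⟨m, rfl⟩
        rcases Nat.eq_zero_or_pos m with rfl | hm
        · omega
        · have : n ≤ n * m := Nat.le_mul_of_pos_right n hm
          omega
      rw [if_neg this, if_neg hN0]; ring

lemma wgeom (n : ℕ) (hn : 0 < n) :
    ((1 + X ^ n) ^ 2 * (1 - X ^ n : PowerSeries ℚ)⁻¹ : PowerSeries ℚ) =
      PowerSeries.mk fun N => if n ∣ N then (W (N / n) : ℚ) else 0 := by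
  have hc : constantCoeff (1 - X ^ n : PowerSeries ℚ) ≠ 0 := by
    simp [map_sub, map_pow, constantCoeff_X, zero_pow hn.ne']
  rw [eq_comm, PowerSeries.eq_mul_inv_iff_mul_eq hc]
  have expand : ((1 + X ^ n) ^ 2 : PowerSeries ℚ) = 1 + (X ^ n + X ^ n) + X ^ (n + n) := by
    rw [pow_add]; ring
  rw [expand]
  ext N
  rw [mul_sub, mul_one, map_sub, coeff_mul_X_pow', coeff_mk]
  simp only [coeff_mk, map_add, coeff_one, coeff_X_pow]
  by_cases h : n ∣ N
  · obtain ⟨m, rfl⟩ := h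
    have hdiv : n * m / n = m := Nat.mul_div_cancel_left m hn
    rw [if_pos ⟨m, rfl⟩, hdiv]
    match m with
    | 0 =>
      have h1 : ¬ n ≤ n * 0 := by omega
      have h2 : n * 0 = 0 := by omega
      rw [if_neg h1]
      simp [h2, W, show ¬(0 = n) by omega, show ¬((0:ℕ) = n + n) by omega]
    | 1 =>
      have h1 : n ≤ n * 1 := by omega
      have h2 : n * 1 - n = 0 := by omega
      have h3 : n * 1 = n := by omega
      rw [if_pos h1, h2]
      have : (0:ℕ) / n = 0 := Nat.zero_div n
      rw [this, if_pos (dvd_zero n)]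
      simp [W, h3, show ¬(n = 0) by omega, show ¬(n = n + n) by omega]
      norm_num
    | 2 =>
      have h1 : n ≤ n * 2 := by omega
      have h2 : n * 2 - n = n := by omega
      rw [if_pos h1, h2, if_pos (dvd_refl n), Nat.div_self hn]
      simp [W, show n * 2 ≠ 0 by omega, show n * 2 = n + n by omega, show ¬(n + n = n) by omega, show ¬(n = 0) by omega]
      norm_num
    | (m + 3) =>
      have hkey : n * (m + 3) = n * (m + 2) + n := by ring
      have h1 : n ≤ n * (m + 3) := by omega
      have h2 : n * (m + 3) - n = n * (m + 2) := by omega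
      rw [if_pos h1, h2, if_pos (Dvd.intro _ rfl), Nat.mul_div_cancel_left _ hn]
      have h3n : 3 * n ≤ n * (m + 3) := by
        calc 3 * n = n * 3 := by ring
        _ ≤ n * (m + 3) := Nat.mul_le_mul_left n (by omega)
      have e0 : n * (m + 3) ≠ 0 := by omega
      have e1 : n * (m + 3) ≠ n := by omega
      have e2 : n * (m + 3) ≠ n + n := by omega
      simp [W, e0, e1, e2]
  · have h0 : N ≠ 0 := fun hh => h (hh ▸ dvd_zero n)
    have h1 : N ≠ n := fun hh => h (hh ▸ dvd_refl n)
    have h2 : N ≠ n + n := fun hh => h (hh ▸ Dvd.intro 2 (by ring))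
    rw [if_neg h]
    have : ∀ hle : n ≤ N, ¬ n ∣ N - n := by
      intro hle hd
      exact h (by rw [show N = N - n + n by omega]; exact Nat.dvd_add hd dvd_rfl)
    by_cases hle : n ≤ N
    · rw [if_pos hle, if_neg (this hle)]
      simp [h0, h1, h2]
    · rw [if_neg hle]
      simp [h0, h1, h2]



lemma prod_range_two_mul {M : Type*} [CommMonoid M] (f : ℕ → M) (n : ℕ) :
    ∏ j ∈ Finset.range (2 * n), f j =
      (∏ m ∈ Finset.range n, f (2 * m)) * ∏ m ∈ Finset.range n, f (2 * m + 1) := by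
  induction n with
  | zero => simp
  | succ n ih =>
    rw [show 2 * (n + 1) = 2 * n + 1 + 1 by ring, Finset.prod_range_succ, Finset.prod_range_succ,
      Finset.prod_range_succ, Finset.prod_range_succ, ih, mul_mul_mul_comm]
    rw [mul_assoc, mul_assoc]

lemma anti_chain (ν : ℕ → ℕ) (hν : ∀ i, ν (i + 1) ≤ ν i) {a b : ℕ} (h : a ≤ b) : ν b ≤ ν a := by
  induction b, h using Nat.le_induction with
  | base => exact le_refl _
  | succ b hab ih => exact (hν b).trans ih

lemma telesc (ν : ℕ → ℕ) (hν : ∀ i, ν (i + 1) ≤ ν i) {a b : ℕ} (h : a ≤ b) :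
    ∑ j ∈ Finset.Ico a b, (ν j - ν (j + 1)) = ν a - ν b := by
  induction b, h using Nat.le_induction with
  | base => simp
  | succ b hab ih =>
    rw [Finset.sum_Ico_succ_top hab, ih]
    have h1 := hν b
    have h2 := anti_chain ν hν hab
    omega

lemma sum_weighted (g : ℕ → ℕ) (n : ℕ) :
    ∑ i ∈ Finset.range n, ∑ j ∈ Finset.Ico i n, g j =
      ∑ j ∈ Finset.range n, (j + 1) * g j := by
  induction n with
  | zero => simp
  | succ n ih =>
    rw [Finset.sum_range_succ (fun j => (j+1) * g j), ← ih]
    have step : ∀ i ∈ Finset.range (n + 1), ∑ j ∈ Finset.Ico i (n + 1), g j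
        = (∑ j ∈ Finset.Ico i n, g j) + g n := by
      intro i hi
      rw [Finset.mem_range] at hi
      rw [Finset.sum_Ico_succ_top (by omega)]
    rw [Finset.sum_congr rfl step, Finset.sum_add_distrib, Finset.sum_range_succ
        (fun i => ∑ j ∈ Finset.Ico i n, g j), Finset.Ico_self, Finset.sum_empty, add_zero]
    simp [Finset.sum_const, Finset.card_range]
    try ring

/-- partial sums of the difference variables -/
def μf (k : ℕ) (e : ℕ → ℕ) (i : ℕ) : ℕ := ∑ j ∈ Finset.Ico i (2 * k), e j

/-- the descending list of parts associated to difference variables -/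
def pList (k : ℕ) (e : ℕ → ℕ) : List ℕ := List.ofFn (fun i : Fin (2 * k) => 2 * μf k e i + 1)

lemma pList_length (k : ℕ) (e : ℕ → ℕ) : (pList k e).length = 2 * k := by
  simp [pList]

lemma μf_anti (k : ℕ) (e : ℕ → ℕ) {a b : ℕ} (h : a ≤ b) : μf k e b ≤ μf k e a :=
  Finset.sum_le_sum_of_subset (Finset.Ico_subset_Ico h le_rfl)

lemma μf_succ (k : ℕ) (e : ℕ → ℕ) {i : ℕ} (h : i < 2 * k) :
    μf k e i = e i + μf k e (i + 1) := by
  rw [μf, Finset.sum_eq_sum_Ico_succ_bot h]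
  rfl

lemma μf_top (k : ℕ) (e : ℕ → ℕ) : μf k e (2 * k) = 0 := by
  simp [μf]

lemma pList_getD (k : ℕ) (e : ℕ → ℕ) {i : ℕ} (h : i < 2 * k) :
    (pList k e).getD i 0 = 2 * μf k e i + 1 := by
  have h' : i < (pList k e).length := by simpa [pList_length] using h
  rw [List.getD_eq_getElem _ _ h']
  simp [pList, List.getElem_ofFn]

lemma pList_sorted (k : ℕ) (e : ℕ → ℕ) : (pList k e).Pairwise (· ≥ ·) := by
  rw [pList, List.pairwise_ofFn]
  intro i j hij
  have := μf_anti k e (le_of_lt (show (i : ℕ) < (j : ℕ) from hij))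
  omega

lemma sort_pList (k : ℕ) (e : ℕ → ℕ) :
    Multiset.sort (↑(pList k e) : Multiset ℕ) (· ≤ ·) = (pList k e).reverse := by
  haveI : IsAntisymm ℕ (· ≤ ·) := ⟨fun _ _ h h' => le_antisymm h h'⟩
  refine List.Perm.eq_of_pairwise' (r := (· ≤ ·)) (Multiset.pairwise_sort _ _) ?_ ?_
  · rw [List.pairwise_reverse]
    exact pList_sorted k e
  · refine List.Perm.trans ?_ (pList k e).reverse_perm.symm
    rw [← Multiset.coe_eq_coe, Multiset.sort_eq]

lemma pList_sum (k : ℕ) (e : ℕ → ℕ) :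
    (pList k e).sum = 2 * k + ∑ j ∈ Finset.range (2 * k), (2 * j + 2) * e j := by
  rw [pList, List.sum_ofFn]
  rw [Fin.sum_univ_eq_sum_range (fun i => 2 * μf k e i + 1)]
  rw [Finset.sum_add_distrib, Finset.sum_const, Finset.card_range, ← Finset.mul_sum]
  have : ∑ i ∈ Finset.range (2 * k), μf k e i = ∑ j ∈ Finset.range (2 * k), (j + 1) * e j :=
    sum_weighted e (2 * k)
  rw [this, smul_eq_mul, mul_one, add_comm, Finset.mul_sum]
  congr 1
  apply Finset.sum_congr rfl
  intro j _
  ring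



/-- The weight `wt_λ = 3^a · 4^b` of a partition into odd parts (parts listed in weakly
decreasing order as `2μ₁+1 ≥ 2μ₂+1 ≥ …`; pairing pattern depends on the parity of the
number `s` of parts). -/
noncomputable def wtOdd {N : ℕ} (c : Nat.Partition N) : ℕ :=
  let l := (Multiset.sort c.parts (· ≤ ·)).reverse
  let s := l.length
  if s % 2 = 1 then
    3 ^ ((Finset.range ((s - 1) / 2)).filter
          (fun j => l.getD (2 * j) 0 = l.getD (2 * j + 1) 0 + 2)).card *
      4 ^ ((Finset.range ((s - 1) / 2)).filter
          (fun j => l.getD (2 * j + 1) 0 + 4 ≤ l.getD (2 * j) 0)).card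
  else
    3 ^ ((Finset.range (s / 2 - 1)).filter
          (fun j => l.getD (2 * j + 1) 0 = l.getD (2 * j + 2) 0 + 2)).card *
      4 ^ ((Finset.range (s / 2 - 1)).filter
          (fun j => l.getD (2 * j + 2) 0 + 4 ≤ l.getD (2 * j + 1) 0)).card
def wk (k j : ℕ) : ℕ → ℕ := fun m => if j % 2 = 1 ∧ j + 1 < 2 * k then W m else 1

lemma W_eq (d : ℕ) : W d = 3 ^ (if d = 1 then 1 else 0) * 4 ^ (if 2 ≤ d then 1 else 0) := by
  unfold W
  split_ifs <;> norm_num <;> omega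

/-- i-th largest part (0 out of range) -/
noncomputable def pr {N : ℕ} (c : Nat.Partition N) (i : ℕ) : ℕ :=
  ((Multiset.sort c.parts (· ≤ ·)).reverse).getD i 0

noncomputable def νf {N : ℕ} (c : Nat.Partition N) (i : ℕ) : ℕ := pr c i / 2

noncomputable def ef (k : ℕ) {N : ℕ} (c : Nat.Partition N) (j : ℕ) : ℕ :=
  if j < 2 * k then νf c j - νf c (j + 1) else 0

lemma R_sorted {N : ℕ} (c : Nat.Partition N) :
    ((Multiset.sort c.parts (· ≤ ·)).reverse).Pairwise (· ≥ ·) := by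
  rw [List.pairwise_reverse]
  exact List.Pairwise.imp (fun h => h) (Multiset.pairwise_sort c.parts (· ≤ ·))

lemma pr_anti {N : ℕ} (c : Nat.Partition N) (i : ℕ) : pr c (i + 1) ≤ pr c i := by
  set R := (Multiset.sort c.parts (· ≤ ·)).reverse with hR
  by_cases h : i + 1 < R.length
  · have h' : i < R.length := by omega
    rw [pr, pr, ← hR, List.getD_eq_getElem _ _ h, List.getD_eq_getElem _ _ h']
    exact List.Pairwise.rel_get_of_lt (R_sorted c) (a := ⟨i, h'⟩) (b := ⟨i + 1, h⟩)
      (by simp)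
  · rw [pr, ← hR, List.getD_eq_default _ _ (by omega)]
    exact Nat.zero_le _
lemma νf_anti {N : ℕ} (c : Nat.Partition N) (i : ℕ) : νf c (i + 1) ≤ νf c i :=
  Nat.div_le_div_right (pr_anti c i)

lemma pr_mem {N : ℕ} (c : Nat.Partition N) {i : ℕ}
    (h : i < Multiset.card c.parts) : pr c i ∈ c.parts := by
  have h' : i < ((Multiset.sort c.parts (· ≤ ·)).reverse).length := by
    rw [List.length_reverse, Multiset.length_sort]; exact h
  rw [pr, List.getD_eq_getElem _ _ h']
  have hmem := List.getElem_mem h'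
  rw [List.mem_reverse, Multiset.mem_sort] at hmem
  exact hmem

lemma pr_odd_eq {N : ℕ} (c : Nat.Partition N) (hodd : ∀ p ∈ c.parts, Odd p) {i : ℕ}
    (h : i < Multiset.card c.parts) : 2 * νf c i + 1 = pr c i := by
  obtain ⟨m, hm⟩ := hodd _ (pr_mem c h)
  rw [νf, hm]
  omega

lemma pr_top {N : ℕ} (k : ℕ) (c : Nat.Partition N) (hcard : Multiset.card c.parts = 2 * k)
    {i : ℕ} (h : 2 * k ≤ i) : pr c i = 0 := by
  rw [pr, List.getD_eq_default]
  rw [List.length_reverse, Multiset.length_sort, hcard]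
  exact h


lemma μf_ef {N : ℕ} (k : ℕ) (c : Nat.Partition N) (hcard : Multiset.card c.parts = 2 * k)
    {i : ℕ} (h : i ≤ 2 * k) : μf k (ef k c) i = νf c i := by
  have hstep : ∀ j ∈ Finset.Ico i (2 * k), ef k c j = νf c j - νf c (j + 1) := by
    intro j hj
    rw [Finset.mem_Ico] at hj
    rw [ef, if_pos hj.2]
  have htop : νf c (2 * k) = 0 := by
    rw [νf, pr_top k c hcard le_rfl]
  rw [μf, Finset.sum_congr rfl hstep, telesc (νf c) (νf_anti c) h, htop, Nat.sub_zero]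

lemma pList_ef {N : ℕ} (k : ℕ) (c : Nat.Partition N) (hcard : Multiset.card c.parts = 2 * k)
    (hodd : ∀ p ∈ c.parts, Odd p) :
    pList k (ef k c) = (Multiset.sort c.parts (· ≤ ·)).reverse := by
  apply List.ext_getElem
  · rw [pList_length, List.length_reverse, Multiset.length_sort, hcard]
  · intro i h1 h2
    have hi : i < 2 * k := by rwa [pList_length] at h1
    have e1 : (pList k (ef k c))[i] = 2 * μf k (ef k c) i + 1 := by
      rw [← List.getD_eq_getElem _ 0 h1, pList_getD k _ hi]
    have e2 : ((Multiset.sort c.parts (· ≤ ·)).reverse)[i] = pr c i := by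
      rw [pr, List.getD_eq_getElem _ 0 h2]
    rw [e1, e2, μf_ef k c hcard (le_of_lt hi), pr_odd_eq c hodd (hcard ▸ hi)]

noncomputable def toPartition (k N : ℕ) (e : ℕ → ℕ) (hsum : (pList k e).sum = N) :
    Nat.Partition N where
  parts := (pList k e : Multiset ℕ)
  parts_pos := by
    intro p hp
    rw [Multiset.mem_coe, pList, List.mem_ofFn] at hp
    obtain ⟨i, rfl⟩ := hp
    omega
  parts_sum := by rwa [Multiset.sum_coe]

lemma parts_toPartition (k N : ℕ) (e : ℕ → ℕ) (hsum : (pList k e).sum = N) :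
    (toPartition k N e hsum).parts = (pList k e : Multiset ℕ) := rfl

lemma pr_toPartition (k N : ℕ) (e : ℕ → ℕ) (hsum : (pList k e).sum = N) (i : ℕ) :
    pr (toPartition k N e hsum) i = (pList k e).getD i 0 := by
  rw [pr, parts_toPartition, sort_pList, List.reverse_reverse]

lemma νf_toPartition (k N : ℕ) (e : ℕ → ℕ) (hsum : (pList k e).sum = N) (i : ℕ) :
    νf (toPartition k N e hsum) i = μf k e i := by
  by_cases h : i < 2 * k
  · rw [νf, pr_toPartition, pList_getD k e h]
    omega
  · rw [νf, pr_toPartition, List.getD_eq_default _ _ (by rw [pList_length]; omega),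
      μf, Finset.Ico_eq_empty (by omega), Finset.sum_empty]
    norm_num

lemma ef_toPartition (k N : ℕ) (e : ℕ → ℕ) (hsum : (pList k e).sum = N)
    (he : ∀ j, 2 * k ≤ j → e j = 0) :
    ef k (toPartition k N e hsum) = e := by
  funext j
  by_cases h : j < 2 * k
  · rw [ef, if_pos h, νf_toPartition, νf_toPartition, μf_succ k e h]
    omega
  · rw [ef, if_neg h, he j (by omega)]

lemma ef_zero_of_ge {N : ℕ} (k : ℕ) (c : Nat.Partition N) {j : ℕ} (h : 2 * k ≤ j) :
    ef k c j = 0 := by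
  rw [ef, if_neg (by omega)]


lemma wtOdd_eq {N : ℕ} (k : ℕ) (hk : 1 ≤ k) (c : Nat.Partition N)
    (hcard : Multiset.card c.parts = 2 * k) (hodd : ∀ p ∈ c.parts, Odd p) :
    wtOdd c = ∏ j ∈ Finset.range (2 * k), wk k j (ef k c j) := by
  have hlen : ((Multiset.sort c.parts (· ≤ ·)).reverse).length = 2 * k := by
    rw [List.length_reverse, Multiset.length_sort, hcard]
  have hgetD : ∀ i, ((Multiset.sort c.parts (· ≤ ·)).reverse).getD i 0 = pr c i :=
    fun i => rfl
  simp only [wtOdd, hlen, hgetD]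
  rw [if_neg (by omega)]
  rw [show 2 * k / 2 - 1 = k - 1 by omega]
  have hfilt1 : Finset.filter (fun j => pr c (2*j+1) = pr c (2*j+2) + 2) (Finset.range (k-1))
      = Finset.filter (fun j => ef k c (2*j+1) = 1) (Finset.range (k-1)) := by
    apply Finset.filter_congr
    intro j hj
    rw [Finset.mem_range] at hj
    have h1 : 2*j+1 < 2*k := by omega
    have h2 : 2*j+2 < 2*k := by omega
    have ha := pr_odd_eq c hodd (hcard ▸ h1)
    have hb := pr_odd_eq c hodd (hcard ▸ h2)
    have hanti := νf_anti c (2*j+1)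
    simp only [ef, if_pos h1, show 2*j+1+1 = 2*j+2 by omega]
    omega
  have hfilt2 : Finset.filter (fun j => pr c (2*j+2) + 4 ≤ pr c (2*j+1)) (Finset.range (k-1))
      = Finset.filter (fun j => 2 ≤ ef k c (2*j+1)) (Finset.range (k-1)) := by
    apply Finset.filter_congr
    intro j hj
    rw [Finset.mem_range] at hj
    have h1 : 2*j+1 < 2*k := by omega
    have h2 : 2*j+2 < 2*k := by omega
    have ha := pr_odd_eq c hodd (hcard ▸ h1)
    have hb := pr_odd_eq c hodd (hcard ▸ h2)
    have hanti := νf_anti c (2*j+1)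
    simp only [ef, if_pos h1, show 2*j+1+1 = 2*j+2 by omega]
    omega
  rw [hfilt1, hfilt2]
  rw [prod_range_two_mul (fun j => wk k j (ef k c j)) k]
  have heven : ∏ m ∈ Finset.range k, wk k (2*m) (ef k c (2*m)) = 1 := by
    apply Finset.prod_eq_one
    intro m _
    simp only [wk]
    rw [if_neg (by omega)]
  rw [heven, one_mul]
  have hsplit := Finset.prod_range_succ (fun m => wk k (2*m+1) (ef k c (2*m+1))) (k-1)
  rw [show k - 1 + 1 = k by omega] at hsplit
  rw [hsplit]
  have hlast : wk k (2*(k-1)+1) (ef k c (2*(k-1)+1)) = 1 := by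
    simp only [wk]
    rw [if_neg (by omega)]
  rw [hlast, mul_one]
  have hW : ∀ m ∈ Finset.range (k-1), wk k (2*m+1) (ef k c (2*m+1)) = W (ef k c (2*m+1)) := by
    intro m hm
    rw [Finset.mem_range] at hm
    simp only [wk]
    rw [if_pos ⟨by omega, by omega⟩]
  rw [Finset.prod_congr rfl hW,
    Finset.prod_congr rfl (fun m _ => W_eq (ef k c (2*m+1))), Finset.prod_mul_distrib,
    Finset.prod_pow_eq_pow_sum, Finset.prod_pow_eq_pow_sum,
    ← Finset.card_filter, ← Finset.card_filter]


noncomputable def H (k j : ℕ) : PowerSeries ℚ :=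
  PowerSeries.mk fun n => if (2 * j + 2) ∣ n then (wk k j (n / (2 * j + 2)) : ℚ) else 0

lemma H_even (k m : ℕ) (hm : m < k) :
    H k (2 * m) = (1 - X ^ (4 * m + 2) : PowerSeries ℚ)⁻¹ := by
  rw [geom (4 * m + 2) (by omega), H]
  refine congrArg PowerSeries.mk (funext fun n => ?_)
  have hcond : ¬((2 * m) % 2 = 1 ∧ 2 * m + 1 < 2 * k) := by omega
  simp only [wk, if_neg hcond, show 2 * (2 * m) + 2 = 4 * m + 2 by ring, Nat.cast_one]

lemma H_odd (k m : ℕ) (hm : m < k - 1) :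
    H k (2 * m + 1) = (1 + X ^ (4 * m + 4)) ^ 2 * (1 - X ^ (4 * m + 4) : PowerSeries ℚ)⁻¹ := by
  rw [wgeom (4 * m + 4) (by omega), H]
  refine congrArg PowerSeries.mk (funext fun n => ?_)
  have hcond : (2 * m + 1) % 2 = 1 ∧ (2 * m + 1) + 1 < 2 * k := ⟨by omega, by omega⟩
  simp only [wk, if_pos hcond, show 2 * (2 * m + 1) + 2 = 4 * m + 4 by ring]

lemma H_last (k : ℕ) (hk : 1 ≤ k) :
    H k (2 * (k - 1) + 1) = (1 - X ^ (4 * k) : PowerSeries ℚ)⁻¹ := by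
  rw [geom (4 * k) (by omega), H]
  refine congrArg PowerSeries.mk (funext fun n => ?_)
  have hcond : ¬((2 * (k - 1) + 1) % 2 = 1 ∧ (2 * (k - 1) + 1) + 1 < 2 * k) := by omega
  simp only [wk, if_neg hcond, show 2 * (2 * (k - 1) + 1) + 2 = 4 * k by omega, Nat.cast_one]

lemma rhs_eq (k : ℕ) (hk : 1 ≤ k) :
    (X ^ (2 * k) * (1 - X ^ (4 * k) : PowerSeries ℚ)⁻¹ *
        (∏ j ∈ Finset.Icc 1 k, (1 - X ^ (4 * j - 2) : PowerSeries ℚ)⁻¹) *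
        ∏ j ∈ Finset.Icc 1 (k - 1),
          (1 + X ^ (4 * j)) ^ 2 * (1 - X ^ (4 * j) : PowerSeries ℚ)⁻¹)
      = X ^ (2 * k) * ∏ j ∈ Finset.range (2 * k), H k j := by
  rw [prod_range_two_mul (H k) k]
  rw [Finset.prod_congr rfl (fun m hm => H_even k m (Finset.mem_range.mp hm))]
  have hsplit := Finset.prod_range_succ (fun m => H k (2 * m + 1)) (k - 1)
  rw [show k - 1 + 1 = k by omega] at hsplit
  rw [hsplit, H_last k hk]
  rw [Finset.prod_congr rfl (fun m hm => H_odd k m (Finset.mem_range.mp hm))]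
  have hIcc1 : ∏ j ∈ Finset.Icc 1 k, (1 - X ^ (4 * j - 2) : PowerSeries ℚ)⁻¹
      = ∏ m ∈ Finset.range k, (1 - X ^ (4 * m + 2) : PowerSeries ℚ)⁻¹ := by
    rw [← Finset.Ico_add_one_right_eq_Icc, Finset.prod_Ico_eq_prod_range,
      show k + 1 - 1 = k by omega]
    apply Finset.prod_congr rfl
    intro m _
    rw [show 4 * (1 + m) - 2 = 4 * m + 2 by omega]
  have hIcc2 : ∏ j ∈ Finset.Icc 1 (k - 1),
        ((1 + X ^ (4 * j)) ^ 2 * (1 - X ^ (4 * j) : PowerSeries ℚ)⁻¹)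
      = ∏ m ∈ Finset.range (k - 1),
        ((1 + X ^ (4 * m + 4)) ^ 2 * (1 - X ^ (4 * m + 4) : PowerSeries ℚ)⁻¹) := by
    rw [← Finset.Ico_add_one_right_eq_Icc, Finset.prod_Ico_eq_prod_range,
      show k - 1 + 1 - 1 = k - 1 by omega]
    apply Finset.prod_congr rfl
    intro m _
    rw [show 4 * (1 + m) = 4 * m + 4 by omega]
  rw [hIcc1, hIcc2]
  ring


noncomputable def toL (k N : ℕ) (c : Nat.Partition N) : ℕ →₀ ℕ :=
  Finsupp.onFinset (Finset.range (2 * k)) (fun j => (2 * j + 2) * ef k c j)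
    (fun a ha => by
      rw [Finset.mem_range]
      by_contra hcon
      apply ha
      show (2 * a + 2) * ef k c a = 0
      rw [ef_zero_of_ge k c (by omega), mul_zero])

lemma toL_apply (k N : ℕ) (c : Nat.Partition N) (j : ℕ) :
    toL k N c j = (2 * j + 2) * ef k c j := Finsupp.onFinset_apply


/-- The generating function `∑_λ wt_λ q^{|λ|}`, the sum over partitions λ into odd
parts having exactly `2k` parts. -/
noncomputable def lhs (k : ℕ) : PowerSeries ℚ :=
  PowerSeries.mk fun N =>
    ((∑ c ∈ Finset.univ.filter
        (fun c : Nat.Partition N =>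
          (∀ p ∈ c.parts, Odd p) ∧ Multiset.card c.parts = 2 * k),
        wtOdd c : ℕ) : ℚ)
theorem stmt12 (k : ℕ) (hk : 1 ≤ k) :
    lhs k =
      X ^ (2 * k) * (1 - X ^ (4 * k) : PowerSeries ℚ)⁻¹ *
        (∏ j ∈ Finset.Icc 1 k, (1 - X ^ (4 * j - 2) : PowerSeries ℚ)⁻¹) *
        ∏ j ∈ Finset.Icc 1 (k - 1),
          (1 + X ^ (4 * j)) ^ 2 * (1 - X ^ (4 * j) : PowerSeries ℚ)⁻¹ := by
  rw [rhs_eq k hk]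
  ext N
  simp only [lhs, coeff_mk]
  rw [coeff_X_pow_mul']
  by_cases hN : 2 * k ≤ N
  · rw [if_pos hN, coeff_prod]
    have hzero : ∀ l ∈ Finset.finsuppAntidiag (Finset.range (2 * k)) (N - 2 * k),
        (∏ i ∈ Finset.range (2 * k), (PowerSeries.coeff (l i)) (H k i)) ≠ 0 →
        (∀ j ∈ Finset.range (2 * k), (2 * j + 2) ∣ l j) := by
      intro l _ hne j hj
      by_contra hdvd
      apply hne
      apply Finset.prod_eq_zero hj
      rw [H, coeff_mk, if_neg hdvd]
    rw [← Finset.sum_filter_of_ne hzero, Nat.cast_sum]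
    refine Finset.sum_bij' (fun c hc => toL k N c) (fun l hl => ?mapB) ?hi ?hj ?li ?ri ?h
    case mapB =>
      refine toPartition k N (fun j => l j / (2 * j + 2)) ?_
      rw [Finset.mem_filter, Finset.mem_finsuppAntidiag] at hl
      obtain ⟨⟨hsum, hsupp⟩, hdvd⟩ := hl
      rw [pList_sum]
      have : ∀ j ∈ Finset.range (2 * k), (2 * j + 2) * (l j / (2 * j + 2)) = l j := by
        intro j hj
        exact Nat.mul_div_cancel' (hdvd j hj)
      rw [Finset.sum_congr rfl this, hsum]
      omega
    case hi =>
      intro c hc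
      rw [Finset.mem_filter] at hc
      obtain ⟨_, hodd, hcard⟩ := hc
      beta_reduce
      rw [Finset.mem_filter, Finset.mem_finsuppAntidiag]
      refine ⟨⟨?_, Finsupp.support_onFinset_subset⟩, ?_⟩
      · have hps := pList_sum k (ef k c)
        rw [pList_ef k c hcard hodd] at hps
        have hRsum : ((Multiset.sort c.parts (· ≤ ·)).reverse).sum = N := by
          rw [List.sum_reverse, ← Multiset.sum_coe, Multiset.sort_eq, c.parts_sum]
        simp only [toL_apply]
        omega
      · intro j hj
        rw [toL_apply]
        exact Dvd.intro _ rfl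
    case hj =>
      intro l hl
      rw [Finset.mem_filter]
      refine ⟨Finset.mem_univ _, ?_, ?_⟩
      · intro p hp
        rw [parts_toPartition, Multiset.mem_coe, pList, List.mem_ofFn] at hp
        obtain ⟨i, hi⟩ := hp
        rw [← hi]
        exact (even_two_mul _).add_one
      · rw [parts_toPartition, Multiset.coe_card, pList_length]
    case li =>
      intro c hc
      rw [Finset.mem_filter] at hc
      obtain ⟨_, hodd, hcard⟩ := hc
      beta_reduce
      apply Nat.Partition.ext
      rw [parts_toPartition]
      have he : (fun j => (toL k N c j) / (2 * j + 2)) = ef k c := by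
        funext j
        rw [toL_apply]
        exact Nat.mul_div_cancel_left _ (by omega)
      rw [he, pList_ef k c hcard hodd, ← Multiset.coe_reverse, List.reverse_reverse,
        Multiset.sort_eq]
    case ri =>
      intro l hl
      rw [Finset.mem_filter, Finset.mem_finsuppAntidiag] at hl
      obtain ⟨⟨hsum, hsupp⟩, hdvd⟩ := hl
      have hl0 : ∀ j, 2 * k ≤ j → l j = 0 := by
        intro j hj
        by_contra hcon
        have := hsupp (Finsupp.mem_support_iff.mpr hcon)
        rw [Finset.mem_range] at this
        omega
      have he0 : ∀ j, 2 * k ≤ j → l j / (2 * j + 2) = 0 := by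
        intro j hj
        rw [hl0 j hj, Nat.zero_div]
      ext j
      beta_reduce
      rw [toL_apply, ef_toPartition k N _ _ he0]
      show (2 * j + 2) * (l j / (2 * j + 2)) = l j
      by_cases hj : j < 2 * k
      · exact Nat.mul_div_cancel' (hdvd j (Finset.mem_range.mpr hj))
      · rw [he0 j (by omega), mul_zero, hl0 j (by omega)]
    case h =>
      intro c hc
      rw [Finset.mem_filter] at hc
      obtain ⟨_, hodd, hcard⟩ := hc
      beta_reduce
      rw [wtOdd_eq k hk c hcard hodd, Nat.cast_prod]
      apply Finset.prod_congr rfl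
      intro j hj
      rw [H, coeff_mk, toL_apply,
        if_pos (Dvd.intro _ rfl), Nat.mul_div_cancel_left _ (show 0 < 2 * j + 2 by omega)]
  · rw [if_neg hN]
    have hempty : Finset.univ.filter
        (fun c : Nat.Partition N =>
          (∀ p ∈ c.parts, Odd p) ∧ Multiset.card c.parts = 2 * k) = ∅ := by
      rw [Finset.filter_eq_empty_iff]
      rintro c - ⟨hodd, hcard⟩
      have h1 : ∀ p ∈ c.parts, 1 ≤ p := fun p hp => c.parts_pos hp
      have h2 := Multiset.card_nsmul_le_sum h1
      rw [c.parts_sum, hcard, smul_eq_mul, mul_one] at h2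
      omega
    rw [hempty, Finset.sum_empty, Nat.cast_zero]

end Stmt12
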